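/- Let w, v ∈ W and let s = s_i be a simple reflection with sv > v in the Bruhat order. Then p(w, sv) = ((t1+t2)/E(α_s))·s[p(w,v)] − t1 t2 · s[p(sw,v)] if sw > w, and p(w, sv) = (t1+t2)(1/E(α_s) + 1)·s[p(w,v)] + s[p(sw,v)] if sw < w, where s[·] denotes the action of s on coefficients in Q_{t1,t2}(Λ) and α_s = α_i is the simple root of s. -/

import Mathlib

open CoxeterSystem

/-- `E(λ) = e^{-λ} - 1`. -/
noncomputable def Eelt {Λ : Type*} [AddCommGroup Λ] {K : Type*} [Field K]
    (exp : Multiplicative Λ →* Kˣ) (lam : Λ) : K :=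
  ((exp (Multiplicative.ofAdd (-lam)) : Kˣ) : K) - 1

/-- The Bruhat order on `W`: `u ≤ v` iff there is a chain from `u` to `v` each of whose
steps multiplies on the right by a reflection while increasing the length. -/
def bruhatLE {r : ℕ} {W : Type*} [Group W] {M : CoxeterMatrix (Fin r)}
    (cs : CoxeterSystem M W) (u v : W) : Prop :=
  Relation.ReflTransGen
    (fun a b => (∃ t, cs.IsReflection t ∧ b = a * t) ∧ cs.length a < cs.length b) u v

/-- The strict Bruhat order on `W`. -/
def bruhatLT {r : ℕ} {W : Type*} [Group W] {M : CoxeterMatrix (Fin r)}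
    (cs : CoxeterSystem M W) (u v : W) : Prop :=
  Relation.TransGen
    (fun a b => (∃ t, cs.IsReflection t ∧ b = a * t) ∧ cs.length a < cs.length b) u v

/-- `p(w,v)`: the coefficient of `h_w` in the expansion `Y_v = ∑_w p(w,v) h_w` of the
Yang–Baxter basis element `Y_v` in the standard basis (`hb w = h w`). -/
noncomputable def pCoeff {W : Type*} {K : Type*} [Field K] {H : Type*} [Ring H] [Algebra K H]
    (hb : Module.Basis W K H) (Y : W → H) (w v : W) : K :=
  hb.repr (Y v) w

open Finset in
lemma auxRepr {W K H : Type*} [Fintype W] [Field K] [AddCommGroup H] [Module K H]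
    (hb : Module.Basis W K H) (a b : K) (μ : H →ₗ[K] H) (φ : W → W) (L : W → Prop) [DecidablePred L]
    (hφφ : ∀ u, φ (φ u) = u)
    (hLφ : ∀ u, L (φ u) ↔ ¬ L u)
    (hmulA : ∀ u, L u → μ (hb u) = hb (φ u))
    (hmulB : ∀ u, ¬ L u → μ (hb u) = a • hb u - b • hb (φ u))
    (x : H) (w : W) :
    hb.repr (μ x) w =
      if L w then -b * hb.repr x (φ w) else hb.repr x (φ w) + a * hb.repr x w := by
  classical
  have hiff : ∀ u w', φ u = w' ↔ u = φ w' := fun u w' =>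
    ⟨fun h => by rw [← h, hφφ], fun h => by rw [h, hφφ]⟩
  have base : ∀ u : W, hb.repr (μ (hb u)) w =
      if L w then -b * (if u = φ w then 1 else 0)
      else (if u = φ w then 1 else 0) + a * (if u = w then 1 else 0) := by
    intro u
    by_cases hw : L w <;> by_cases hu : L u
    · rw [hmulA u hu, hb.repr_self_apply]
      have h1 : φ u ≠ w := by
        intro hh
        exact ((hLφ w).mp ((hiff u w).mp hh ▸ hu)) hw
      have h2 : u ≠ φ w := fun hh => h1 ((hiff u w).mpr hh)
      simp [h1, h2, hw]
    · rw [hmulB u hu]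
      simp only [map_sub, map_smul, Finsupp.sub_apply, Finsupp.smul_apply,
        hb.repr_self_apply, smul_eq_mul, if_pos hw]
      have h3 : u ≠ w := fun hh => hu (by rwa [hh])
      rw [if_neg h3, show (φ u = w) ↔ (u = φ w) from hiff u w]
      ring
    · rw [hmulA u hu, hb.repr_self_apply]
      have h3 : u ≠ w := fun hh => hw (by rwa [hh] at hu)
      simp only [if_neg hw, if_neg h3, mul_zero, add_zero, hiff u w]
    · rw [hmulB u hu]
      simp only [map_sub, map_smul, Finsupp.sub_apply, Finsupp.smul_apply,
        hb.repr_self_apply, smul_eq_mul, if_neg hw]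
      have h4 : u ≠ φ w := fun hh => hu (by rw [hh]; exact (hLφ w).mpr hw)
      have h5 : φ u ≠ w := fun hh => h4 ((hiff u w).mp hh)
      rw [if_neg h4, if_neg h5]
      ring
  conv_lhs => rw [← hb.sum_repr x, map_sum, map_sum, Finsupp.finset_sum_apply]
  have step : ∀ u : W, hb.repr (μ (hb.repr x u • hb u)) w
      = hb.repr x u * hb.repr (μ (hb u)) w := by
    intro u; rw [map_smul, map_smul, Finsupp.smul_apply, smul_eq_mul]
  rw [Finset.sum_congr rfl fun u _ => (step u).trans (by rw [base u])]
  by_cases hw : L w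
  · simp only [if_pos hw]
    rw [Finset.sum_congr rfl (fun u _ => show
        hb.repr x u * (-b * (if u = φ w then 1 else 0))
          = if u = φ w then -b * hb.repr x u else 0 by
      split_ifs <;> ring)]
    rw [Finset.sum_ite_eq' univ (φ w) (fun u => -b * hb.repr x u), if_pos (mem_univ _)]
  · simp only [if_neg hw]
    rw [Finset.sum_congr rfl (fun u _ => show
        hb.repr x u * ((if u = φ w then 1 else 0) + a * (if u = w then 1 else 0))
          = (if u = φ w then hb.repr x u else 0) + (if u = w then a * hb.repr x u else 0) by
      split_ifs <;> ring)]
    rw [Finset.sum_add_distrib,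
      Finset.sum_ite_eq' univ (φ w) (fun u => hb.repr x u), if_pos (mem_univ _),
      Finset.sum_ite_eq' univ w (fun u => a * hb.repr x u), if_pos (mem_univ _)]

/-- left recurrence for `p`: if `sv > v` then
`p(w,sv) = ((t1+t2)/E(α_s))·s[p(w,v)] − t1t2·s[p(sw,v)]` if `sw > w`, and
`p(w,sv) = (t1+t2)(1/E(α_s) + 1)·s[p(w,v)] + s[p(sw,v)]` if `sw < w`. -/
theorem pCoeff_left_recurrence
    {r : ℕ} {W : Type*} [Group W] [Fintype W] {M : CoxeterMatrix (Fin r)}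
    (cs : CoxeterSystem M W)
    {Λ : Type*} [AddCommGroup Λ] (wΛ : W →* Multiplicative (AddAut Λ)) (α : Fin r → Λ)
    (coroot : Fin r → (Λ →+ ℤ))
    (hact : ∀ (i : Fin r) (lam : Λ), Multiplicative.toAdd (wΛ (cs.simple i)) lam = lam - (coroot i lam) • α i)
    (hαα : ∀ i : Fin r, coroot i (α i) = 2)
    (hindep : LinearIndependent ℤ α)
    (hcart : ∀ i j : Fin r, i ≠ j →
      (M.M i j = 2 ∧ coroot i (α j) = 0 ∧ coroot j (α i) = 0) ∨
      (M.M i j = 3 ∧ coroot i (α j) = -1 ∧ coroot j (α i) = -1) ∨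
      (M.M i j = 4 ∧ coroot i (α j) * coroot j (α i) = 2 ∧
        coroot i (α j) < 0 ∧ coroot j (α i) < 0) ∨
      (M.M i j = 6 ∧ coroot i (α j) * coroot j (α i) = 3 ∧
        coroot i (α j) < 0 ∧ coroot j (α i) < 0))
    {K : Type*} [Field K] (exp : Multiplicative Λ →* Kˣ)
    (hexp_inj : Function.Injective exp)
    (t1 t2 : K) (wK : W →* RingAut K)
    (hwexp : ∀ (w : W) (lam : Λ),
      wK w ((exp (Multiplicative.ofAdd lam) : Kˣ) : K)
        = ((exp (Multiplicative.ofAdd (Multiplicative.toAdd (wΛ w) lam)) : Kˣ) : K))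
    (hwt1 : ∀ w : W, wK w t1 = t1) (hwt2 : ∀ w : W, wK w t2 = t2)
    {H : Type*} [Ring H] [Algebra K H]
    (h : W → H) (hb : Module.Basis W K H)
    (hbasis : ∀ w : W, hb w = h w)
    (hone : h 1 = 1)
    (hmul : ∀ u v : W, cs.length (u * v) = cs.length u + cs.length v →
      h (u * v) = h u * h v)
    (hquad : ∀ i : Fin r,
      (h (cs.simple i) - algebraMap K H t1) * (h (cs.simple i) - algebraMap K H t2) = 0)
    (Y : W → H) (hY1 : Y 1 = 1)
    (hYrec : ∀ (w : W) (i : Fin r), cs.length (w * cs.simple i) = cs.length w + 1 →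
      Y (w * cs.simple i)
        = Y w * (h (cs.simple i) + algebraMap K H ((t1 + t2) / wK w (Eelt exp (α i)))))
    (w v : W) (i : Fin r)
    (hsv : bruhatLT cs v (cs.simple i * v)) :
    (bruhatLT cs w (cs.simple i * w) →
      pCoeff hb Y w (cs.simple i * v)
        = (t1 + t2) / Eelt exp (α i) * wK (cs.simple i) (pCoeff hb Y w v)
          - t1 * t2 * wK (cs.simple i) (pCoeff hb Y (cs.simple i * w) v)) ∧
    (bruhatLT cs (cs.simple i * w) w →
      pCoeff hb Y w (cs.simple i * v)
        = (t1 + t2) * (1 / Eelt exp (α i) + 1) * wK (cs.simple i) (pCoeff hb Y w v)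
          + wK (cs.simple i) (pCoeff hb Y (cs.simple i * w) v)) := by
  classical
  have hσa : wK (cs.simple i) (t1 + t2) = t1 + t2 := by rw [map_add, hwt1, hwt2]
  -- quadratic relation in product form
  have hs2 : ∀ j : Fin r, h (cs.simple j) * h (cs.simple j)
      = algebraMap K H (t1 + t2) * h (cs.simple j) - algebraMap K H (t1 * t2) := by
    intro j
    have comm := Algebra.commutes t2 (h (cs.simple j))
    have expand : (h (cs.simple j) - algebraMap K H t1) * (h (cs.simple j) - algebraMap K H t2)
        = h (cs.simple j) * h (cs.simple j)
          - algebraMap K H (t1 + t2) * h (cs.simple j) + algebraMap K H (t1 * t2) := by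
      rw [sub_mul, mul_sub, mul_sub, map_add, add_mul, map_mul, ← comm]
      abel
    have h0 := hquad j
    rw [expand] at h0
    calc h (cs.simple j) * h (cs.simple j)
        = (h (cs.simple j) * h (cs.simple j)
            - algebraMap K H (t1 + t2) * h (cs.simple j) + algebraMap K H (t1 * t2))
          + (algebraMap K H (t1 + t2) * h (cs.simple j) - algebraMap K H (t1 * t2)) := by abel
      _ = _ := by rw [h0, zero_add]
  -- basis multiplication formulas
  have hmulLA : ∀ u : W, cs.length (cs.simple i * u) = cs.length u + 1 →
      h (cs.simple i) * h u = h (cs.simple i * u) := by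
    intro u hu
    exact (hmul (cs.simple i) u (by rw [cs.length_simple]; omega)).symm
  have hmulLB : ∀ u : W, ¬ (cs.length (cs.simple i * u) = cs.length u + 1) →
      h (cs.simple i) * h u
        = algebraMap K H (t1 + t2) * h u - algebraMap K H (t1 * t2) * h (cs.simple i * u) := by
    intro u hu
    have hd : cs.length (cs.simple i * u) + 1 = cs.length u :=
      (cs.length_simple_mul u i).resolve_left hu
    have e1 : h u = h (cs.simple i) * h (cs.simple i * u) := by
      have h2 := hmul (cs.simple i) (cs.simple i * u)
        (by rw [cs.simple_mul_simple_cancel_left, cs.length_simple]; omega)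
      rw [cs.simple_mul_simple_cancel_left] at h2
      exact h2
    rw [e1, ← mul_assoc, hs2 i, sub_mul, mul_assoc, ← e1]
  have hmulRA : ∀ (j : Fin r) (u : W), cs.length (u * cs.simple j) = cs.length u + 1 →
      h u * h (cs.simple j) = h (u * cs.simple j) := by
    intro j u hu
    exact (hmul u (cs.simple j) (by rw [cs.length_simple]; omega)).symm
  have hmulRB : ∀ (j : Fin r) (u : W), ¬ (cs.length (u * cs.simple j) = cs.length u + 1) →
      h u * h (cs.simple j)
        = algebraMap K H (t1 + t2) * h u - algebraMap K H (t1 * t2) * h (u * cs.simple j) := by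
    intro j u hu
    have hd : cs.length (u * cs.simple j) + 1 = cs.length u :=
      (cs.length_mul_simple u j).resolve_left hu
    have e1 : h u = h (u * cs.simple j) * h (cs.simple j) := by
      have h2 := hmul (u * cs.simple j) (cs.simple j)
        (by rw [cs.simple_mul_simple_cancel_right, cs.length_simple]; omega)
      rw [cs.simple_mul_simple_cancel_right] at h2
      exact h2
    rw [e1, mul_assoc, hs2 j, mul_sub, ← mul_assoc,
      ← Algebra.commutes (t1 + t2) (h (u * cs.simple j)),
      ← Algebra.commutes (t1 * t2) (h (u * cs.simple j)), mul_assoc, ← e1]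
  -- coefficient formulas for left and right multiplication by a generator
  have keyL : ∀ (x : H) (u : W), hb.repr (h (cs.simple i) * x) u =
      if cs.length (cs.simple i * u) = cs.length u + 1
      then -(t1 * t2) * hb.repr x (cs.simple i * u)
      else hb.repr x (cs.simple i * u) + (t1 + t2) * hb.repr x u := by
    intro x u
    have h2 := auxRepr hb (t1 + t2) (t1 * t2) (LinearMap.mulLeft K (h (cs.simple i)))
      (fun z => cs.simple i * z)
      (fun z => cs.length (cs.simple i * z) = cs.length z + 1)
      (fun z => cs.simple_mul_simple_cancel_left i)
      (fun z => by
        show cs.length (cs.simple i * (cs.simple i * z)) = cs.length (cs.simple i * z) + 1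
            ↔ ¬ cs.length (cs.simple i * z) = cs.length z + 1
        rw [cs.simple_mul_simple_cancel_left]
        rcases cs.length_simple_mul z i with hh | hh <;> constructor <;> intro <;> omega)
      (fun z hz => by
        rw [LinearMap.mulLeft_apply, hbasis z, hbasis (cs.simple i * z)]
        exact hmulLA z hz)
      (fun z hz => by
        rw [LinearMap.mulLeft_apply, hbasis z, hbasis (cs.simple i * z),
          Algebra.smul_def, Algebra.smul_def]
        exact hmulLB z hz)
      x u
    simpa [LinearMap.mulLeft_apply] using h2
  have keyR : ∀ (j : Fin r) (x : H) (u : W), hb.repr (x * h (cs.simple j)) u =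
      if cs.length (u * cs.simple j) = cs.length u + 1
      then -(t1 * t2) * hb.repr x (u * cs.simple j)
      else hb.repr x (u * cs.simple j) + (t1 + t2) * hb.repr x u := by
    intro j x u
    have h2 := auxRepr hb (t1 + t2) (t1 * t2) (LinearMap.mulRight K (h (cs.simple j)))
      (fun z => z * cs.simple j)
      (fun z => cs.length (z * cs.simple j) = cs.length z + 1)
      (fun z => cs.simple_mul_simple_cancel_right j)
      (fun z => by
        show cs.length (z * cs.simple j * cs.simple j) = cs.length (z * cs.simple j) + 1
            ↔ ¬ cs.length (z * cs.simple j) = cs.length z + 1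
        rw [cs.simple_mul_simple_cancel_right]
        rcases cs.length_mul_simple z j with hh | hh <;> constructor <;> intro <;> omega)
      (fun z hz => by
        rw [LinearMap.mulRight_apply, hbasis z, hbasis (z * cs.simple j)]
        exact hmulRA j z hz)
      (fun z hz => by
        rw [LinearMap.mulRight_apply, hbasis z, hbasis (z * cs.simple j),
          Algebra.smul_def, Algebra.smul_def]
        exact hmulRB j z hz)
      x u
    simpa [LinearMap.mulRight_apply] using h2
  -- the twist operator
  set T : H → H := fun x => ∑ u : W, (wK (cs.simple i)) (hb.repr x u) • hb u with hT
  have reprT : ∀ (x : H) (u : W), hb.repr (T x) u = wK (cs.simple i) (hb.repr x u) := by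
    intro x u
    simp only [hT, map_sum, Finsupp.finset_sum_apply, map_smul, Finsupp.smul_apply,
      hb.repr_self_apply, smul_eq_mul, mul_ite, mul_one, mul_zero,
      Finset.sum_ite_eq', Finset.mem_univ, if_true]
  have T1 : T 1 = 1 := by
    apply hb.ext_elem
    intro u
    have h1 : (1 : H) = hb 1 := by rw [hbasis, hone]
    rw [reprT, h1, hb.repr_self_apply]
    split_ifs <;> simp
  have Tadd : ∀ x y : H, T (x + y) = T x + T y := by
    intro x y
    apply hb.ext_elem
    intro u
    simp [reprT, map_add, Finsupp.add_apply]
  have TmulR : ∀ (j : Fin r) (x : H), T (x * h (cs.simple j)) = T x * h (cs.simple j) := by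
    intro j x
    apply hb.ext_elem
    intro u
    rw [reprT, keyR j x u, keyR j (T x) u, apply_ite (wK (cs.simple i))]
    simp only [map_mul, map_neg, map_add, hwt1, hwt2, reprT]
  have TmulC : ∀ (x : H) (c : K),
      T (x * algebraMap K H c) = T x * algebraMap K H (wK (cs.simple i) c) := by
    intro x c
    have e1 : ∀ (y : H) (c' : K), y * algebraMap K H c' = c' • y := by
      intro y c'
      rw [Algebra.smul_def]
      exact (Algebra.commutes c' y).symm
    rw [e1, e1]
    apply hb.ext_elem
    intro u
    rw [reprT, map_smul, Finsupp.smul_apply, smul_eq_mul, map_mul,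
      map_smul, Finsupp.smul_apply, smul_eq_mul, reprT]
  -- main claim: left recurrence at the level of H
  have main : ∀ (n : ℕ) (v : W), cs.length v = n →
      cs.length (cs.simple i * v) = cs.length v + 1 →
      Y (cs.simple i * v)
        = (h (cs.simple i) + algebraMap K H ((t1 + t2) / Eelt exp (α i))) * T (Y v) := by
    intro n
    induction n with
    | zero =>
      intro v hv0 _
      have hv1 : v = 1 := cs.length_eq_zero_iff.mp hv0
      subst hv1
      have hr := hYrec 1 i (by rw [one_mul, cs.length_simple, cs.length_one])
      rw [one_mul] at hr
      rw [mul_one, hr, hY1, one_mul, T1, mul_one]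
      have h1 : wK (1 : W) (Eelt exp (α i)) = Eelt exp (α i) := by rw [map_one]; rfl
      rw [h1]
    | succ n IH =>
      intro v hv hsv1
      obtain ⟨ω, hω, rfl⟩ := cs.exists_reduced_word v
      rcases List.eq_nil_or_concat' ω with rfl | ⟨ω', j, rfl⟩
      · rw [cs.wordProd_nil, cs.length_one] at hv
        omega
      · have hvv : cs.wordProd (ω' ++ [j]) = cs.wordProd ω' * cs.simple j := by
          rw [cs.wordProd_append, cs.wordProd_singleton]
        set v' := cs.wordProd ω' with hv'
        rw [hvv] at hv hsv1
        have hωlen : ω'.length + 1 = n + 1 := by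
          have h3 := hω.eq
          rw [hvv] at h3
          simp only [List.length_append, List.length_singleton] at h3
          omega
        have hl1 : cs.length v' ≤ n := by
          have h2 := cs.length_wordProd_le ω'
          rw [← hv'] at h2
          omega
        have hv2 : cs.length (v' * cs.simple j) = n + 1 := hv
        have hlv' : cs.length v' = n := by
          have h2 := cs.length_mul_le v' (cs.simple j)
          rw [cs.length_simple] at h2
          omega
        have hsv2 : cs.length (cs.simple i * (v' * cs.simple j)) = n + 2 := by omega
        have hlsv' : cs.length (cs.simple i * v') = n + 1 := by
          rcases cs.length_simple_mul v' i with hh | hh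
          · omega
          · exfalso
            have hle : cs.length (cs.simple i * v' * cs.simple j)
                ≤ cs.length (cs.simple i * v') + 1 := by
              have h2 := cs.length_mul_le (cs.simple i * v') (cs.simple j)
              rw [cs.length_simple] at h2
              exact h2
            rw [mul_assoc] at hle
            omega
        have hYj := hYrec v' j (by omega)
        have hYij := hYrec (cs.simple i * v') j (by rw [mul_assoc]; omega)
        have hIH := IH v' hlv' (by omega)
        have hwKmul : (t1 + t2) / wK (cs.simple i * v') (Eelt exp (α j))
            = wK (cs.simple i) ((t1 + t2) / wK v' (Eelt exp (α j))) := by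
          rw [map_div₀, hσa]
          congr 1
          rw [map_mul]
          rfl
        calc Y (cs.simple i * cs.wordProd (ω' ++ [j]))
            = Y ((cs.simple i * v') * cs.simple j) := by rw [hvv, mul_assoc]
          _ = Y (cs.simple i * v') * (h (cs.simple j)
                + algebraMap K H ((t1 + t2) / wK (cs.simple i * v') (Eelt exp (α j)))) := hYij
          _ = ((h (cs.simple i) + algebraMap K H ((t1 + t2) / Eelt exp (α i))) * T (Y v'))
                * (h (cs.simple j) + algebraMap K H
                    (wK (cs.simple i) ((t1 + t2) / wK v' (Eelt exp (α j))))) := by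
              rw [hIH, hwKmul]
          _ = (h (cs.simple i) + algebraMap K H ((t1 + t2) / Eelt exp (α i)))
                * T (Y v' * (h (cs.simple j)
                    + algebraMap K H ((t1 + t2) / wK v' (Eelt exp (α j))))) := by
              rw [mul_assoc]
              congr 1
              rw [mul_add (Y v'), Tadd, TmulR j (Y v'), TmulC (Y v'), mul_add (T (Y v'))]
          _ = (h (cs.simple i) + algebraMap K H ((t1 + t2) / Eelt exp (α i)))
                * T (Y (v' * cs.simple j)) := by rw [← hYj]
          _ = _ := by rw [hvv]
  -- lengths from the Bruhat order
  have blt_len : ∀ {x y : W}, bruhatLT cs x y → cs.length x < cs.length y := by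
    intro x y hxy
    induction hxy with
    | single hh => exact hh.2
    | tail _ hh ih => exact ih.trans hh.2
  have hlsv : cs.length (cs.simple i * v) = cs.length v + 1 := by
    have h1 := blt_len hsv
    have h2 := cs.length_mul_le (cs.simple i) v
    rw [cs.length_simple] at h2
    omega
  have hmain := main (cs.length v) v rfl hlsv
  have hrepr : ∀ u : W, hb.repr (Y (cs.simple i * v)) u
      = (if cs.length (cs.simple i * u) = cs.length u + 1
          then -(t1 * t2) * wK (cs.simple i) (hb.repr (Y v) (cs.simple i * u))
          else wK (cs.simple i) (hb.repr (Y v) (cs.simple i * u))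
            + (t1 + t2) * wK (cs.simple i) (hb.repr (Y v) u))
        + (t1 + t2) / Eelt exp (α i) * wK (cs.simple i) (hb.repr (Y v) u) := by
    intro u
    rw [hmain, add_mul, map_add, Finsupp.add_apply, keyL (T (Y v)) u]
    have e2 : algebraMap K H ((t1 + t2) / Eelt exp (α i)) * T (Y v)
        = ((t1 + t2) / Eelt exp (α i)) • T (Y v) := (Algebra.smul_def _ _).symm
    rw [e2, map_smul, Finsupp.smul_apply, smul_eq_mul]
    simp only [reprT]
  constructor
  · intro hw
    have hlw : cs.length (cs.simple i * w) = cs.length w + 1 := by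
      have h1 := blt_len hw
      have h2 := cs.length_mul_le (cs.simple i) w
      rw [cs.length_simple] at h2
      omega
    have e := hrepr w
    rw [if_pos hlw] at e
    simp only [pCoeff]
    rw [e]
    ring
  · intro hw
    have hlw : ¬ (cs.length (cs.simple i * w) = cs.length w + 1) := by
      have h1 := blt_len hw
      omega
    have e := hrepr w
    rw [if_neg hlw] at e
    simp only [pCoeff]
    rw [e]
    rw [div_eq_mul_inv, one_div]
    ring
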